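/- Let (X,s) and (X',s') be strongly stratified samples of ℝ^N that are δ-close for some δ > 0, and let v = (v₁,v₂) ∈ Ω be such that v+δ := (v₁−δ, v₂+δ) ∈ Ω and v−δ := (v₁+δ, v₂−δ) ∈ Ω. Set M := the maximum, over the two parameters w ∈ {v+δ, v−δ}, of the maximum of the three componentwise Hausdorff distances between D_v(X,s) and D_w(X,s). Then each of the three componentwise Hausdorff distances between D_v(X,s) and D_v(X',s') is at most δ + M. -/

import Mathlib

open Metric Set
open scoped ENNReal

namespace Stmt3

variable {N : ℕ}

/-- Sublevel set `X_{≤ b}`. -/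
def sub (X : Set (EuclideanSpace ℝ (Fin N))) (s : EuclideanSpace ℝ (Fin N) → ℝ) (b : ℝ) :
    Set (EuclideanSpace ℝ (Fin N)) := {x | x ∈ X ∧ s x ≤ b}

/-- Superlevel set `X_{≥ a}`. -/
def supl (X : Set (EuclideanSpace ℝ (Fin N))) (s : EuclideanSpace ℝ (Fin N) → ℝ) (a : ℝ) :
    Set (EuclideanSpace ℝ (Fin N)) := {x | x ∈ X ∧ a ≤ s x}

/-- Interval level set `X^a_b`. -/
def ival (X : Set (EuclideanSpace ℝ (Fin N))) (s : EuclideanSpace ℝ (Fin N) → ℝ) (a b : ℝ) :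
    Set (EuclideanSpace ℝ (Fin N)) := {x | x ∈ X ∧ a ≤ s x ∧ s x ≤ b}

/-- The parameter space `Ω = {(v₁,v₂) : 0 < v₁ < v₂ < 1}`. -/
def Omega : Set (ℝ × ℝ) := {p | 0 < p.1 ∧ p.1 < p.2 ∧ p.2 < 1}

/-- The stratification diagram `D_v(X,s) = (X_{≤v₂}, X^{v₁}_{v₂}, X_{≥v₁})`. -/
def Dv (X : Set (EuclideanSpace ℝ (Fin N))) (s : EuclideanSpace ℝ (Fin N) → ℝ) (v : ℝ × ℝ) :
    Set (EuclideanSpace ℝ (Fin N)) × Set (EuclideanSpace ℝ (Fin N)) ×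
      Set (EuclideanSpace ℝ (Fin N)) :=
  (sub X s v.2, ival X s v.1 v.2, supl X s v.1)

/-- Maximum of the three componentwise Hausdorff distances between two diagram triples. -/
noncomputable def diagDist
    (D D' : Set (EuclideanSpace ℝ (Fin N)) × Set (EuclideanSpace ℝ (Fin N)) ×
      Set (EuclideanSpace ℝ (Fin N))) : ℝ≥0∞ :=
  max (EMetric.hausdorffEdist D.1 D'.1)
    (max (EMetric.hausdorffEdist D.2.1 D'.2.1) (EMetric.hausdorffEdist D.2.2 D'.2.2))

/-- Two strongly stratified samples are `δ`-close. -/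
def StronglyClose (δ : ℝ) (X X' : Set (EuclideanSpace ℝ (Fin N)))
    (s s' : EuclideanSpace ℝ (Fin N) → ℝ) : Prop :=
  (∀ x ∈ X, ∃ y ∈ X', ‖x - y‖ ≤ δ ∧ |s x - s' y| ≤ δ) ∧
  (∀ y ∈ X', ∃ x ∈ X, ‖x - y‖ ≤ δ ∧ |s x - s' y| ≤ δ)


lemma edist_le_of_norm_sub_le {N : ℕ} {x y : EuclideanSpace ℝ (Fin N)} {δ : ℝ}
    (h : ‖x - y‖ ≤ δ) : edist x y ≤ ENNReal.ofReal δ := by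
  rw [edist_dist]
  exact ENNReal.ofReal_le_ofReal (by rwa [dist_eq_norm])

lemma infEdist_le_aux {E : Type*} [EMetricSpace E] {B A' : Set E} {d : ℝ≥0∞}
    (hB : ∀ b ∈ B, ∃ y ∈ A', edist b y ≤ d) (x : E) :
    EMetric.infEdist x A' ≤ EMetric.infEdist x B + d := by
  conv_rhs => rw [EMetric.infEdist, Metric.infEDist, ENNReal.iInf_add]
  refine le_iInf fun y => ?_
  by_cases hy : y ∈ B
  · simp only [hy, iInf_pos]
    obtain ⟨z, hz, hd⟩ := hB y hy
    calc EMetric.infEdist x A' ≤ edist x z := EMetric.infEdist_le_edist_of_mem hz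
      _ ≤ edist x y + edist y z := edist_triangle _ _ _
      _ ≤ edist x y + d := by gcongr
  · simp [hy]

lemma comp_bound {E : Type*} [EMetricSpace E] {A A' B C : Set E} {d M : ℝ≥0∞}
    (hAB : EMetric.hausdorffEdist A B ≤ M) (hAC : EMetric.hausdorffEdist A C ≤ M)
    (h1 : ∀ b ∈ B, ∃ y ∈ A', edist b y ≤ d)
    (h2 : ∀ y ∈ A', ∃ c ∈ C, edist y c ≤ d) :
    EMetric.hausdorffEdist A A' ≤ d + M := by
  apply EMetric.hausdorffEdist_le_of_infEdist
  · intro x hx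
    calc EMetric.infEdist x A' ≤ EMetric.infEdist x B + d := infEdist_le_aux h1 x
      _ ≤ EMetric.hausdorffEdist A B + d := by
          gcongr; exact EMetric.infEdist_le_hausdorffEdist_of_mem hx
      _ ≤ M + d := by gcongr
      _ = d + M := add_comm _ _
  · intro y hy
    obtain ⟨c, hc, hd⟩ := h2 y hy
    calc EMetric.infEdist y A ≤ edist y c + EMetric.infEdist c A :=
        EMetric.infEdist_le_edist_add_infEdist
      _ ≤ d + EMetric.hausdorffEdist C A := by
          gcongr; exact EMetric.infEdist_le_hausdorffEdist_of_mem hc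
      _ ≤ d + M := by gcongr; exact (Metric.hausdorffEDist_comm).trans_le hAC

/-- If `(X,s)` and `(X',s')` are `δ`-close and `v ± δ ∈ Ω`, then the distance between
`D_v(X,s)` and `D_v(X',s')` is bounded by `δ` plus the maximal distance of `D_v(X,s)`
to `D_{v±δ}(X,s)`. -/
theorem diagram_distance_bound {N : ℕ}
    (X X' : Set (EuclideanSpace ℝ (Fin N))) (s s' : EuclideanSpace ℝ (Fin N) → ℝ)
    (hs : ∀ x ∈ X, s x ∈ Set.Icc (0 : ℝ) 1) (hs' : ∀ y ∈ X', s' y ∈ Set.Icc (0 : ℝ) 1)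
    (δ : ℝ) (hδ : 0 < δ) (hclose : StronglyClose δ X X' s s')
    (v₁ v₂ : ℝ) (hv : (v₁, v₂) ∈ Omega)
    (hvp : (v₁ - δ, v₂ + δ) ∈ Omega) (hvm : (v₁ + δ, v₂ - δ) ∈ Omega) :
    diagDist (Dv X s (v₁, v₂)) (Dv X' s' (v₁, v₂)) ≤
      ENNReal.ofReal δ +
        max (diagDist (Dv X s (v₁, v₂)) (Dv X s (v₁ - δ, v₂ + δ)))
            (diagDist (Dv X s (v₁, v₂)) (Dv X s (v₁ + δ, v₂ - δ))) := by
  have key1 := hclose.1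
  have key2 := hclose.2
  simp only [diagDist, Dv]
  refine max_le ?_ (max_le ?_ ?_)
  · refine comp_bound (B := sub X s (v₂ - δ)) (C := sub X s (v₂ + δ))
      (le_trans (le_max_left _ _) (le_max_right _ _))
      (le_trans (le_max_left _ _) (le_max_left _ _)) ?_ ?_
    · rintro b ⟨hbX, hbs⟩
      obtain ⟨y, hyX', hny, hsy⟩ := key1 b hbX
      have := abs_le.1 hsy
      exact ⟨y, ⟨hyX', by linarith⟩, edist_le_of_norm_sub_le hny⟩
    · rintro y ⟨hyX', hys⟩
      obtain ⟨x, hxX, hnx, hsx⟩ := key2 y hyX'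
      have := abs_le.1 hsx
      refine ⟨x, ⟨hxX, by linarith⟩, ?_⟩
      rw [edist_comm]; exact edist_le_of_norm_sub_le hnx
  · refine comp_bound (B := ival X s (v₁ + δ) (v₂ - δ)) (C := ival X s (v₁ - δ) (v₂ + δ))
      (le_trans (le_trans (le_max_left _ _) (le_max_right _ _)) (le_max_right _ _))
      (le_trans (le_trans (le_max_left _ _) (le_max_right _ _)) (le_max_left _ _)) ?_ ?_
    · rintro b ⟨hbX, hbs1, hbs2⟩
      obtain ⟨y, hyX', hny, hsy⟩ := key1 b hbX
      have := abs_le.1 hsy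
      exact ⟨y, ⟨hyX', by linarith, by linarith⟩, edist_le_of_norm_sub_le hny⟩
    · rintro y ⟨hyX', hys1, hys2⟩
      obtain ⟨x, hxX, hnx, hsx⟩ := key2 y hyX'
      have := abs_le.1 hsx
      refine ⟨x, ⟨hxX, by linarith, by linarith⟩, ?_⟩
      rw [edist_comm]; exact edist_le_of_norm_sub_le hnx
  · refine comp_bound (B := supl X s (v₁ + δ)) (C := supl X s (v₁ - δ))
      (le_trans (le_trans (le_max_right _ _) (le_max_right _ _)) (le_max_right _ _))
      (le_trans (le_trans (le_max_right _ _) (le_max_right _ _)) (le_max_left _ _)) ?_ ?_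
    · rintro b ⟨hbX, hbs⟩
      obtain ⟨y, hyX', hny, hsy⟩ := key1 b hbX
      have := abs_le.1 hsy
      exact ⟨y, ⟨hyX', by linarith⟩, edist_le_of_norm_sub_le hny⟩
    · rintro y ⟨hyX', hys⟩
      obtain ⟨x, hxX, hnx, hsx⟩ := key2 y hyX'
      have := abs_le.1 hsx
      refine ⟨x, ⟨hxX, by linarith⟩, ?_⟩
      rw [edist_comm]; exact edist_le_of_norm_sub_le hnx


end Stmt3
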